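/- (Rhemtulla) Let G = A * B be a free product, a ∈ A of order ≥ 3, and t_k(g) = d_k(g) − d*_k(g) where d_k (resp. d*_k) counts a-segments (resp. a⁻¹-segments) of length 2k+1 in the reduced form of g. Then for any fixed g, h ∈ G, the equality t_k(gh) = t_k(g) + t_k(h) holds for all but at most 9 natural numbers k. -/

import Mathlib

open Monoid Monoid.CoprodI

attribute [local instance] Classical.propDecidable

/-- The list of syllables of the reduced word representing `g`. -/
noncomputable def syllables {ι : Type*} {M : ι → Type*} [∀ i, Group (M i)]
    (g : CoprodI M) : List (Σ i, M i) :=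
  letI := Classical.decEq ι
  letI : ∀ i, DecidableEq (M i) := fun _ => Classical.decEq _
  (Word.equiv g).toList

/-- `g` is a palindrome iff its reduced word reads the same backwards. -/
noncomputable def IsPalindrome {ι : Type*} {M : ι → Type*} [∀ i, Group (M i)]
    (g : CoprodI M) : Prop :=
  (syllables g).reverse = syllables g

/-- `segCount s k g` is the number of `s`-segments of syllable length `2k+1`
in the reduced form of `g`: pairs of consecutive occurrences of the syllable `s`
at distance `2k+2` in the syllable list. -/
noncomputable def segCount {ι : Type*} {M : ι → Type*} [∀ i, Group (M i)]
    (s : Σ i, M i) (k : ℕ) (g : CoprodI M) : ℕ :=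
  ((Finset.range (syllables g).length ×ˢ Finset.range (syllables g).length).filter
    (fun pq => pq.1 < pq.2 ∧ (syllables g)[pq.1]? = some s ∧ (syllables g)[pq.2]? = some s ∧
      (∀ r ∈ Finset.Ioo pq.1 pq.2, (syllables g)[r]? ≠ some s) ∧ pq.2 - pq.1 = 2*k+2)).card


section Counting

variable {α β : Type*}

lemma getElem?_append_l {l₁ l₂ : List α} {n : ℕ} (h : n < l₁.length) :
    (l₁ ++ l₂)[n]? = l₁[n]? := by
  rw [List.getElem?_append, if_pos h]

/-- The segment predicate: `(i,j)` is a pair of consecutive occurrences of `s` in `L`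
at distance `2k+2`. -/
def SegPred (s : α) (k : ℕ) (L : List α) (i j : ℕ) : Prop :=
  i < j ∧ L[i]? = some s ∧ L[j]? = some s ∧
    (∀ r ∈ Finset.Ioo i j, L[r]? ≠ some s) ∧ j - i = 2*k+2

/-- List-level segment count. -/
noncomputable def cnt (s : α) (k : ℕ) (L : List α) : ℕ :=
  ((Finset.range L.length ×ˢ Finset.range L.length).filter
    (fun pq => SegPred s k L pq.1 pq.2)).card

lemma lt_length_of_getElem? {L : List α} {j : ℕ} {s : α} (h : L[j]? = some s) :
    j < L.length := by
  obtain ⟨h', -⟩ := List.getElem?_eq_some_iff.mp h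
  exact h'

lemma cnt_short {s : α} {k : ℕ} {L : List α} (hL : L.length ≤ 1) : cnt s k L = 0 := by
  rw [cnt, Finset.card_eq_zero, Finset.filter_eq_empty_iff]
  rintro ⟨i, j⟩ _ ⟨hij, -, hsj, -⟩
  have := lt_length_of_getElem? hsj
  omega

lemma segPred_append_low {p q : List α} {s : α} {k i j : ℕ} (hj : j < p.length) :
    SegPred s k (p ++ q) i j ↔ SegPred s k p i j := by
  unfold SegPred
  constructor
  · rintro ⟨h1, h2, h3, h4, h5⟩
    refine ⟨h1, ?_, ?_, ?_, h5⟩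
    · rw [← getElem?_append_l (l₂ := q) (by omega : i < p.length)]; exact h2
    · rw [← getElem?_append_l (l₂ := q) hj]; exact h3
    · intro r hr
      rw [Finset.mem_Ioo] at hr
      rw [← getElem?_append_l (l₂ := q) (by omega : r < p.length)]
      exact h4 r (Finset.mem_Ioo.mpr hr)
  · rintro ⟨h1, h2, h3, h4, h5⟩
    refine ⟨h1, ?_, ?_, ?_, h5⟩
    · rw [getElem?_append_l (by omega : i < p.length)]; exact h2
    · rw [getElem?_append_l hj]; exact h3
    · intro r hr
      rw [Finset.mem_Ioo] at hr
      rw [getElem?_append_l (by omega : r < p.length)]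
      exact h4 r (Finset.mem_Ioo.mpr hr)

lemma segPred_append_high {p q : List α} {s : α} {k i j : ℕ} (hi : p.length ≤ i) :
    SegPred s k (p ++ q) i j ↔ SegPred s k q (i - p.length) (j - p.length) := by
  unfold SegPred
  constructor
  · rintro ⟨h1, h2, h3, h4, h5⟩
    refine ⟨by omega, ?_, ?_, ?_, by omega⟩
    · rw [List.getElem?_append_right hi] at h2; exact h2
    · rw [List.getElem?_append_right (by omega : p.length ≤ j)] at h3; exact h3
    · intro r hr
      rw [Finset.mem_Ioo] at hr
      have h6 := h4 (r + p.length) (Finset.mem_Ioo.mpr (by omega))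
      rw [List.getElem?_append_right (by omega : p.length ≤ r + p.length)] at h6
      simpa [Nat.add_sub_cancel] using h6
  · rintro ⟨h1, h2, h3, h4, h5⟩
    refine ⟨by omega, ?_, ?_, ?_, by omega⟩
    · rw [List.getElem?_append_right hi]; exact h2
    · rw [List.getElem?_append_right (by omega : p.length ≤ j)]; exact h3
    · intro r hr
      rw [Finset.mem_Ioo] at hr
      rw [List.getElem?_append_right (by omega : p.length ≤ r)]
      exact h4 (r - p.length) (Finset.mem_Ioo.mpr (by omega))

/-- A junction segment crossing the boundary between `p` and `q`. -/
def Cross (s : α) (p q : List α) (k : ℕ) : Prop :=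
  ∃ i j, i < p.length ∧ p.length ≤ j ∧ SegPred s k (p ++ q) i j

lemma cnt_append {s : α} {p q : List α} {k : ℕ} (h : ¬ Cross s p q k) :
    cnt s k (p ++ q) = cnt s k p + cnt s k q := by
  classical
  have hA : ((Finset.range (p ++ q).length ×ˢ Finset.range (p ++ q).length).filter
        (fun pq => SegPred s k (p ++ q) pq.1 pq.2)).filter
        (fun pq : ℕ × ℕ => pq.2 < p.length) =
      (Finset.range p.length ×ˢ Finset.range p.length).filter
        (fun pq => SegPred s k p pq.1 pq.2) := by
    ext ⟨i, j⟩
    simp only [Finset.mem_filter, Finset.mem_product, Finset.mem_range]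
    constructor
    · rintro ⟨⟨⟨hi, hj⟩, hpred⟩, hjn⟩
      have hij := hpred.1
      exact ⟨⟨by omega, hjn⟩, (segPred_append_low hjn).1 hpred⟩
    · rintro ⟨⟨hi, hj⟩, hpred⟩
      have hlen : (p ++ q).length = p.length + q.length := List.length_append
      exact ⟨⟨⟨by omega, by omega⟩, (segPred_append_low hj).2 hpred⟩, hj⟩
  have hB : ((Finset.range (p ++ q).length ×ˢ Finset.range (p ++ q).length).filter
        (fun pq => SegPred s k (p ++ q) pq.1 pq.2)).filter
        (fun pq : ℕ × ℕ => ¬ pq.2 < p.length) =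
      ((Finset.range q.length ×ˢ Finset.range q.length).filter
        (fun pq => SegPred s k q pq.1 pq.2)).map
        ⟨fun pq : ℕ × ℕ => (pq.1 + p.length, pq.2 + p.length), by
          unfold Function.Injective
          rintro ⟨i, j⟩ ⟨i', j'⟩ hpq
          simp only [Prod.mk.injEq] at hpq ⊢
          omega⟩ := by
    ext ⟨i, j⟩
    simp only [Finset.mem_filter, Finset.mem_product, Finset.mem_range, Finset.mem_map,
      Function.Embedding.coeFn_mk, Prod.mk.injEq]
    constructor
    · rintro ⟨⟨⟨hi, hj⟩, hpred⟩, hjn⟩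
      have hni : p.length ≤ i := by
        by_contra hni
        exact h ⟨i, j, by omega, by omega, hpred⟩
      have hlen : (p ++ q).length = p.length + q.length := List.length_append
      refine ⟨(i - p.length, j - p.length),
        ⟨⟨by omega, by omega⟩, (segPred_append_high hni).1 hpred⟩, by omega, by omega⟩
    · rintro ⟨⟨a, b⟩, ⟨⟨ha, hb⟩, hpred⟩, hia, hjb⟩
      have hlen : (p ++ q).length = p.length + q.length := List.length_append
      have hni : p.length ≤ i := by omega
      refine ⟨⟨⟨by omega, by omega⟩, ?_⟩, by omega⟩
      rw [segPred_append_high hni]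
      have h1 : i - p.length = a := by omega
      have h2 : j - p.length = b := by omega
      rw [h1, h2]
      exact hpred
  rw [cnt, cnt, cnt,
    ← Finset.card_filter_add_card_filter_not
      (p := fun pq : ℕ × ℕ => pq.2 < p.length), hA, hB, Finset.card_map]

lemma cross_unique {s : α} {p q : List α} {k k' : ℕ}
    (h : Cross s p q k) (h' : Cross s p q k') : k = k' := by
  obtain ⟨i, j, hi, hj, hij, hsi, hsj, hbet, hgap⟩ := h
  obtain ⟨i', j', hi', hj', hij', hsi', hsj', hbet', hgap'⟩ := h'
  have hii : i = i' := by
    by_contra hne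
    rcases Nat.lt_or_ge i i' with hlt | hge
    · exact hbet i' (Finset.mem_Ioo.mpr (by omega)) hsi'
    · exact hbet' i (Finset.mem_Ioo.mpr (by omega)) hsi
  have hjj : j = j' := by
    by_contra hne
    rcases Nat.lt_or_ge j j' with hlt | hge
    · exact hbet' j (Finset.mem_Ioo.mpr (by omega)) hsj
    · exact hbet j' (Finset.mem_Ioo.mpr (by omega)) hsj'
  omega

lemma not_cross_of_right {s : α} {p q : List α} {k : ℕ}
    (h : ∀ j : ℕ, q[j]? ≠ some s) : ¬ Cross s p q k := by
  rintro ⟨i, j, hi, hj, hij, hsi, hsj, -, -⟩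
  rw [List.getElem?_append_right hj] at hsj
  exact h _ hsj

/-- The (unique, if any) exceptional `k` for the junction between `p` and `q`. -/
noncomputable def crossK (s : α) (p q : List α) : ℕ :=
  if h : ∃ k, Cross s p q k then h.choose else 0

lemma eq_crossK_of_cross {s : α} {p q : List α} {k : ℕ} (h : Cross s p q k) :
    k = crossK s p q := by
  have he : ∃ k, Cross s p q k := ⟨k, h⟩
  rw [crossK, dif_pos he]
  exact cross_unique h he.choose_spec

lemma word_exc1 (s : α) (p x r : List α) (hx : x.length ≤ 1) :
    ∃ K1 K2 : ℕ,
      (∀ k, k ≠ K1 → k ≠ K2 → cnt s k (p ++ x ++ r) = cnt s k p + cnt s k r) ∧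
      (x ≠ [s] → ∀ k, k ≠ K1 → cnt s k (p ++ x ++ r) = cnt s k p + cnt s k r) := by
  refine ⟨crossK s (p ++ x) r, crossK s p x, ?_, ?_⟩
  · intro k h1 h2
    have hc1 : ¬ Cross s (p ++ x) r k := fun hc => h1 (eq_crossK_of_cross hc)
    have hc2 : ¬ Cross s p x k := fun hc => h2 (eq_crossK_of_cross hc)
    rw [cnt_append hc1, cnt_append hc2, cnt_short hx]
    omega
  · intro hxs k h1
    have hc1 : ¬ Cross s (p ++ x) r k := fun hc => h1 (eq_crossK_of_cross hc)
    have hc2 : ¬ Cross s p x k := by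
      refine not_cross_of_right ?_
      intro j hj
      have hjl := lt_length_of_getElem? hj
      have hj0 : j = 0 := by omega
      subst hj0
      match x, hx, hxs, hj with
      | [z], _, hxs, hj =>
        simp only [List.getElem?_cons_zero, Option.some.injEq] at hj
        exact hxs (by rw [hj])
    rw [cnt_append hc1, cnt_append hc2, cnt_short hx]
    omega

lemma word_exc {sa sa' : α} (hss : sa ≠ sa') (p x r : List α) (hx : x.length ≤ 1) :
    ∃ K1 K2 K3 : ℕ, ∀ k, k ≠ K1 → k ≠ K2 → k ≠ K3 →
      cnt sa k (p ++ x ++ r) = cnt sa k p + cnt sa k r ∧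
      cnt sa' k (p ++ x ++ r) = cnt sa' k p + cnt sa' k r := by
  obtain ⟨K1, K2, hK12, hK1⟩ := word_exc1 sa p x r hx
  obtain ⟨K1', K2', hK12', hK1'⟩ := word_exc1 sa' p x r hx
  by_cases hxa : x = [sa]
  · refine ⟨K1, K2, K1', fun k h1 h2 h3 => ⟨hK12 k h1 h2, hK1' ?_ k h3⟩⟩
    rw [hxa]
    simp [hss]
  · exact ⟨K1, K1', K2', fun k h1 h2 h3 => ⟨hK1 hxa k h1, hK12' k h2 h3⟩⟩

lemma cnt_map {f : α → β} (hf : Function.Injective f) (s : α) (k : ℕ) (L : List α) :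
    cnt (f s) k (L.map f) = cnt s k L := by
  have hiff : ∀ i : ℕ, (L.map f)[i]? = some (f s) ↔ L[i]? = some s := by
    intro i
    rw [List.getElem?_map, Option.map_eq_some_iff]
    constructor
    · rintro ⟨a, ha, hfa⟩
      rw [ha, hf hfa]
    · intro hL
      exact ⟨s, hL, rfl⟩
  rw [cnt, cnt, List.length_map]
  congr 1
  apply Finset.filter_congr
  rintro ⟨i, j⟩ -
  unfold SegPred
  constructor
  · rintro ⟨h1, h2, h3, h4, h5⟩
    exact ⟨h1, (hiff _).1 h2, (hiff _).1 h3,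
      fun r hr hc => h4 r hr ((hiff r).2 hc), h5⟩
  · rintro ⟨h1, h2, h3, h4, h5⟩
    exact ⟨h1, (hiff _).2 h2, (hiff _).2 h3,
      fun r hr hc => h4 r hr ((hiff r).1 hc), h5⟩

lemma segPred_reverse_of {L : List α} {s : α} {k i j : ℕ}
    (h : SegPred s k L.reverse i j) :
    SegPred s k L (L.length - 1 - j) (L.length - 1 - i) := by
  obtain ⟨hij, hsi, hsj, hbet, hgap⟩ := h
  have hjlen : j < L.length := by
    have := lt_length_of_getElem? hsj
    rwa [List.length_reverse] at this
  have hilen : i < L.length := by omega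
  rw [List.getElem?_reverse hjlen] at hsj
  rw [List.getElem?_reverse hilen] at hsi
  refine ⟨by omega, hsj, hsi, ?_, by omega⟩
  intro r hr
  rw [Finset.mem_Ioo] at hr
  have hrlen : r < L.length := by omega
  intro hcon
  refine hbet (L.length - 1 - r) (Finset.mem_Ioo.mpr (by omega)) ?_
  rw [List.getElem?_reverse (by omega)]
  have heq : L.length - 1 - (L.length - 1 - r) = r := by omega
  rw [heq]
  exact hcon

lemma segPred_reverse_of' {L : List α} {s : α} {k i j : ℕ}
    (h : SegPred s k L i j) :
    SegPred s k L.reverse (L.length - 1 - j) (L.length - 1 - i) := by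
  obtain ⟨hij, hsi, hsj, hbet, hgap⟩ := h
  have hjlen : j < L.length := lt_length_of_getElem? hsj
  have hilen : i < L.length := by omega
  refine ⟨by omega, ?_, ?_, ?_, by omega⟩
  · rw [List.getElem?_reverse (by omega)]
    have heq : L.length - 1 - (L.length - 1 - j) = j := by omega
    rw [heq]; exact hsj
  · rw [List.getElem?_reverse (by omega)]
    have heq : L.length - 1 - (L.length - 1 - i) = i := by omega
    rw [heq]; exact hsi
  · intro r hr
    rw [Finset.mem_Ioo] at hr
    have hrlen : r < L.length := by omega
    rw [List.getElem?_reverse (by omega)]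
    exact hbet (L.length - 1 - r) (Finset.mem_Ioo.mpr (by omega))

lemma cnt_reverse (s : α) (k : ℕ) (L : List α) : cnt s k L.reverse = cnt s k L := by
  rw [cnt, cnt, List.length_reverse]
  apply Finset.card_nbij' (i := fun pq : ℕ × ℕ => (L.length - 1 - pq.2, L.length - 1 - pq.1))
    (j := fun pq : ℕ × ℕ => (L.length - 1 - pq.2, L.length - 1 - pq.1))
  · rintro ⟨i, j⟩ hm
    simp only [Finset.mem_coe, Finset.mem_filter, Finset.mem_product, Finset.mem_range] at hm ⊢
    obtain ⟨⟨hi, hj⟩, hpred⟩ := hm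
    exact ⟨⟨by omega, by omega⟩, segPred_reverse_of hpred⟩
  · rintro ⟨i, j⟩ hm
    simp only [Finset.mem_coe, Finset.mem_filter, Finset.mem_product, Finset.mem_range] at hm ⊢
    obtain ⟨⟨hi, hj⟩, hpred⟩ := hm
    exact ⟨⟨by omega, by omega⟩, segPred_reverse_of' hpred⟩
  · rintro ⟨i, j⟩ hm
    simp only [Finset.mem_coe, Finset.mem_filter, Finset.mem_product, Finset.mem_range] at hm
    obtain ⟨⟨hi, hj⟩, hpred⟩ := hm
    have hij := hpred.1
    simp only [Prod.mk.injEq]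
    omega
  · rintro ⟨i, j⟩ hm
    simp only [Finset.mem_coe, Finset.mem_filter, Finset.mem_product, Finset.mem_range] at hm
    obtain ⟨⟨hi, hj⟩, hpred⟩ := hm
    have hij := hpred.1
    simp only [Prod.mk.injEq]
    omega

end Counting


section Structural

variable {ι : Type*} {M : ι → Type*} [∀ i, Group (M i)]

/-- Syllable-wise inverse. -/
def invS (s : Σ i, M i) : Σ i, M i := ⟨s.1, s.2⁻¹⟩

lemma invS_invS (s : Σ i, M i) : invS (invS s) = s := by
  cases s
  simp [invS]
  exact inv_inv _

lemma invS_injective : Function.Injective (invS (M := M)) :=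
  fun a b h => by rw [← invS_invS a, h, invS_invS]

/-- The reduced word of the inverse: reverse and invert the syllables. -/
def invRev (L : List (Σ i, M i)) : List (Σ i, M i) := (L.map invS).reverse

lemma invRev_nil : invRev ([] : List (Σ i, M i)) = [] := rfl

lemma invRev_cons (c : Σ i, M i) (L : List (Σ i, M i)) :
    invRev (c :: L) = invRev L ++ [invS c] := by
  simp [invRev]

section WordLevel

variable [DecidableEq ι] [∀ i, DecidableEq (M i)]

lemma toList_of_smul_of_fstIdx_ne {i : ι} (m : M i) (hm : m ≠ 1) (w : Word M)
    (hw : w.fstIdx ≠ some i) :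
    (of m • w).toList = ⟨i, m⟩ :: w.toList := by
  rw [Word.of_smul_def, Word.equivPair_eq_of_fstIdx_ne hw]
  simp only [Word.rcons, mul_one]
  rw [dif_neg hm]
  simp [Word.cons_toList]

lemma toList_of_smul_cons {i : ι} (m y : M i) {t : List (Σ i, M i)} (w : Word M)
    (hw : w.toList = ⟨i, y⟩ :: t) :
    (of m • w).toList = if m * y = 1 then t else ⟨i, m * y⟩ :: t := by
  have hrc : Word.rcons (Word.equivPair i w) = w := by
    rw [← Word.equivPair_symm]
    exact (Word.equivPair i).symm_apply_apply w
  have hhead : (Word.equivPair i w).head = y ∧ (Word.equivPair i w).tail.toList = t := by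
    by_cases h1 : (Word.equivPair i w).head = 1
    · exfalso
      have htail : (Word.equivPair i w).tail = w := by
        rwa [Word.rcons, dif_pos h1] at hrc
      have hne := (Word.equivPair i w).fstIdx_ne
      rw [htail, Word.fstIdx, hw] at hne
      simp at hne
    · rw [Word.rcons, dif_neg h1] at hrc
      have hlist := congrArg Word.toList hrc
      rw [Word.cons_toList, hw] at hlist
      injection hlist with hhd htl
      obtain ⟨-, h2⟩ := Sigma.mk.inj_iff.mp hhd
      rw [heq_eq_eq] at h2
      exact ⟨h2, htl⟩
  obtain ⟨hy, ht⟩ := hhead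
  rw [Word.of_smul_def, hy]
  by_cases hmy : m * y = 1
  · rw [Word.rcons, dif_pos hmy, if_pos hmy]
    exact ht
  · rw [Word.rcons, dif_neg hmy, if_neg hmy, Word.cons_toList, ht]

end WordLevel

attribute [local instance] Classical.decEq

lemma syllables_toList (g : CoprodI M) : syllables g = (Word.equiv g).toList := rfl

lemma equiv_apply (g : CoprodI M) : Word.equiv g = g • Word.empty := rfl

lemma equiv_mul (m x : CoprodI M) : Word.equiv (m * x) = m • Word.equiv x := by
  rw [equiv_apply, equiv_apply, mul_smul]

lemma equiv_prod (w : Word M) : Word.equiv w.prod = w := by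
  rw [show w.prod = Word.equiv.symm w from rfl]
  exact Equiv.apply_symm_apply _ _

lemma syllables_prod (w : Word M) : syllables w.prod = w.toList := by
  rw [syllables_toList, equiv_prod]

lemma syllables_one : syllables (1 : CoprodI M) = [] := by
  rw [syllables_toList, equiv_apply, one_smul]
  rfl

lemma syllables_of_mul_ne {i : ι} (m : M i) (hm : m ≠ 1) (x : CoprodI M)
    (hx : ∀ c ∈ (syllables x).head?, Sigma.fst c ≠ i) :
    syllables (of m * x) = ⟨i, m⟩ :: syllables x := by
  rw [syllables_toList, equiv_mul, syllables_toList]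
  apply toList_of_smul_of_fstIdx_ne m hm
  rw [Word.fstIdx]
  intro hcon
  rw [Option.map_eq_some_iff] at hcon
  obtain ⟨c, hc, hci⟩ := hcon
  rw [syllables_toList] at hx
  exact hx c hc hci

lemma syllables_of_mul_cons {i : ι} (m y : M i) {t : List (Σ i, M i)} (x : CoprodI M)
    (hx : syllables x = ⟨i, y⟩ :: t) :
    syllables (of m * x) = if m * y = 1 then t else ⟨i, m * y⟩ :: t := by
  rw [syllables_toList] at hx
  rw [syllables_toList, equiv_mul]
  exact toList_of_smul_cons m y (Word.equiv x) hx

/-- Structural decomposition of the reduced word of a product. -/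
theorem mul_syllables_decomp (g h : CoprodI M) :
    (∃ p r q : List (Σ i, M i), syllables g = p ++ r ∧ syllables h = invRev r ++ q ∧
      syllables (g * h) = p ++ q) ∨
    (∃ (p r q : List (Σ i, M i)) (i : ι) (x y : M i), syllables g = p ++ ⟨i, x⟩ :: r ∧
      syllables h = invRev r ++ ⟨i, y⟩ :: q ∧
      syllables (g * h) = p ++ ⟨i, x * y⟩ :: q) := by
  suffices main : ∀ w : Word M,
      (∃ p r q : List (Σ i, M i), syllables w.prod = p ++ r ∧
        syllables h = invRev r ++ q ∧ syllables (w.prod * h) = p ++ q) ∨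
      (∃ (p r q : List (Σ i, M i)) (i : ι) (x y : M i),
        syllables w.prod = p ++ ⟨i, x⟩ :: r ∧
        syllables h = invRev r ++ ⟨i, y⟩ :: q ∧
        syllables (w.prod * h) = p ++ ⟨i, x * y⟩ :: q) by
    have hpg : (Word.equiv g).prod = g := by
      have : Word.equiv.symm (Word.equiv g) = g := Equiv.symm_apply_apply _ _
      exact this
    have hmain := main (Word.equiv g)
    rwa [hpg] at hmain
  intro w
  induction w using Word.consRecOn with
  | empty =>
    left
    refine ⟨[], [], syllables h, ?_, ?_, ?_⟩
    · rw [Word.prod_empty, syllables_one]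
      rfl
    · rw [invRev_nil]
      rfl
    · rw [Word.prod_empty, one_mul]
      rfl
  | cons i m w' hIdx hm ih =>
    rw [Word.prod_cons]
    have hsylg : syllables (of m * w'.prod) = ⟨i, m⟩ :: syllables w'.prod := by
      have h1 := syllables_prod (Word.cons m w' hIdx hm)
      rw [Word.cons_toList, ← syllables_prod w'] at h1
      rw [← Word.prod_cons i m w' hm hIdx]
      exact h1
    have hfst : ∀ c ∈ (syllables w'.prod).head?, Sigma.fst c ≠ i := by
      intro c hc
      rw [syllables_prod] at hc
      have hne := Word.fstIdx_ne_iff.mp hIdx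
      exact fun hci => (hne c hc) hci.symm
    rw [mul_assoc]
    rcases ih with ⟨p, r, q, hg, hh, hgh⟩ | ⟨p, r, q, j, x, y, hg, hh, hgh⟩
    · -- no-merge case from IH
      match p, hg, hgh with
      | c :: p', hg, hgh =>
        have hc : Sigma.fst c ≠ i := by
          apply hfst
          rw [hg]
          rfl
        left
        refine ⟨⟨i, m⟩ :: c :: p', r, q, ?_, hh, ?_⟩
        · rw [hsylg, hg]
          rfl
        · rw [syllables_of_mul_ne m hm (w'.prod * h) ?_, hgh]
          · rfl
          · intro d hd
            rw [hgh] at hd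
            have hcd : c = d := by simpa using hd
            rw [← hcd]
            exact hc
      | [], hg, hgh =>
        simp only [List.nil_append] at hg hgh
        match hq : q, hgh with
        | [], hgh =>
          left
          refine ⟨[⟨i, m⟩], r, [], ?_, hh, ?_⟩
          · rw [hsylg, hg]
            rfl
          · rw [syllables_of_mul_ne m hm (w'.prod * h) ?_, hgh]
            · rfl
            · rw [hgh]
              intro d hd
              simp at hd
        | ⟨j, y⟩ :: q', hgh =>
          by_cases hji : j = i
          · subst hji
            by_cases hmy : m * y = 1
            · -- full cancellation of the new syllable
              left
              refine ⟨[], ⟨j, m⟩ :: r, q', ?_, ?_, ?_⟩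
              · rw [hsylg, hg]
                rfl
              · rw [invRev_cons, hh]
                have hym : y = m⁻¹ := (inv_eq_of_mul_eq_one_right hmy).symm
                rw [hym]
                simp [invS]
              · rw [syllables_of_mul_cons m y (w'.prod * h) hgh, if_pos hmy]
                rfl
            · right
              refine ⟨[], r, q', j, m, y, ?_, hh, ?_⟩
              · rw [hsylg, hg]
                rfl
              · rw [syllables_of_mul_cons m y (w'.prod * h) hgh, if_neg hmy]
                rfl
          · left
            refine ⟨[⟨i, m⟩], r, ⟨j, y⟩ :: q', ?_, hh, ?_⟩
            · rw [hsylg, hg]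
              rfl
            · rw [syllables_of_mul_ne m hm (w'.prod * h) ?_, hgh]
              · rfl
              · rw [hgh]
                intro d hd
                have hcd : (⟨j, y⟩ : Σ i, M i) = d := by simpa using hd
                rw [← hcd]
                exact hji
    · -- merge case from IH
      match p, hg, hgh with
      | c :: p', hg, hgh =>
        have hc : Sigma.fst c ≠ i := by
          apply hfst
          rw [hg]
          rfl
        right
        refine ⟨⟨i, m⟩ :: c :: p', r, q, j, x, y, ?_, hh, ?_⟩
        · rw [hsylg, hg]
          rfl
        · rw [syllables_of_mul_ne m hm (w'.prod * h) ?_, hgh]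
          · rfl
          · intro d hd
            rw [hgh] at hd
            have hcd : c = d := by simpa using hd
            rw [← hcd]
            exact hc
      | [], hg, hgh =>
        simp only [List.nil_append] at hg hgh
        have hji : j ≠ i := by
          exact hfst ⟨j, x⟩ (by rw [hg]; rfl)
        right
        refine ⟨[⟨i, m⟩], r, q, j, x, y, ?_, hh, ?_⟩
        · rw [hsylg, hg]
          rfl
        · rw [syllables_of_mul_ne m hm (w'.prod * h) ?_, hgh]
          · rfl
          · rw [hgh]
            intro d hd
            have hcd : (⟨j, x * y⟩ : Σ i, M i) = d := by simpa using hd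
            rw [← hcd]
            exact hji

end Structural

section Assembly

variable {ι : Type*} {M : ι → Type*} [∀ i, Group (M i)]

lemma segCount_eq_cnt (s : Σ i, M i) (k : ℕ) (g : CoprodI M) :
    segCount s k g = cnt s k (syllables g) := by
  rw [segCount, cnt]
  exact congrArg Finset.card (Finset.filter_congr (fun x _ => Iff.rfl))

lemma cnt_invRev (s : Σ i, M i) (k : ℕ) (L : List (Σ i, M i)) :
    cnt (invS s) k (invRev L) = cnt s k L := by
  rw [invRev, cnt_reverse, cnt_map invS_injective]

lemma encard_nine_le (a b c d e f g h i : ℕ) :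
    ({a, b, c, d, e, f, g, h, i} : Set ℕ).encard ≤ 9 := by
  have hcoe : ({a, b, c, d, e, f, g, h, i} : Set ℕ) =
      (↑({a, b, c, d, e, f, g, h, i} : Finset ℕ) : Set ℕ) := by
    simp
  rw [hcoe, Set.encard_coe_eq_coe_finsetCard]
  have h1 := Finset.card_insert_le a ({b, c, d, e, f, g, h, i} : Finset ℕ)
  have h2 := Finset.card_insert_le b ({c, d, e, f, g, h, i} : Finset ℕ)
  have h3 := Finset.card_insert_le c ({d, e, f, g, h, i} : Finset ℕ)
  have h4 := Finset.card_insert_le d ({e, f, g, h, i} : Finset ℕ)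
  have h5 := Finset.card_insert_le e ({f, g, h, i} : Finset ℕ)
  have h6 := Finset.card_insert_le f ({g, h, i} : Finset ℕ)
  have h7 := Finset.card_insert_le g ({h, i} : Finset ℕ)
  have h8 := Finset.card_insert_le h ({i} : Finset ℕ)
  have h9 : ({i} : Finset ℕ).card = 1 := Finset.card_singleton _
  have hle : ({a, b, c, d, e, f, g, h, i} : Finset ℕ).card ≤ 9 := by omega
  exact_mod_cast hle

lemma t_decomp_bound {α : Type*} {sa sa' : α} (hss : sa ≠ sa')
    (Lg Lh Lgh rr p r q xg xh xgh : List α)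
    (hlg : xg.length ≤ 1) (hlh : xh.length ≤ 1) (hlgh : xgh.length ≤ 1)
    (hg : Lg = p ++ xg ++ r) (hh : Lh = rr ++ xh ++ q) (hgh : Lgh = p ++ xgh ++ q)
    (hrr1 : ∀ k, cnt sa k rr = cnt sa' k r) (hrr2 : ∀ k, cnt sa' k rr = cnt sa k r) :
    {k : ℕ | (cnt sa k Lgh : ℤ) - cnt sa' k Lgh ≠
      ((cnt sa k Lg : ℤ) - cnt sa' k Lg) + ((cnt sa k Lh : ℤ) - cnt sa' k Lh)}.encard ≤ 9 := by
  obtain ⟨A1, A2, A3, hA⟩ := word_exc hss p xg r hlg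
  obtain ⟨B1, B2, B3, hB⟩ := word_exc hss rr xh q hlh
  obtain ⟨C1, C2, C3, hC⟩ := word_exc hss p xgh q hlgh
  refine le_trans (Set.encard_mono ?_) (encard_nine_le A1 A2 A3 B1 B2 B3 C1 C2 C3)
  intro k hk
  rw [Set.mem_setOf_eq] at hk
  by_contra hmem
  apply hk
  simp only [Set.mem_insert_iff, Set.mem_singleton_iff, not_or] at hmem
  obtain ⟨n1, n2, n3, n4, n5, n6, n7, n8, n9⟩ := hmem
  obtain ⟨a1, a2⟩ := hA k n1 n2 n3
  obtain ⟨b1, b2⟩ := hB k n4 n5 n6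
  obtain ⟨c1, c2⟩ := hC k n7 n8 n9
  rw [hg, hh, hgh, a1, a2, b1, b2, c1, c2, hrr1 k, hrr2 k]
  push_cast
  ring

end Assembly


/-- Rhemtulla's lemma: for fixed `g, h`, the equality
`t_k(gh) = t_k(g) + t_k(h)` holds for all but at most 9 naturals `k`. -/
theorem t_additive_except_nine {M : Bool → Type*} [∀ b, Group (M b)]
    [Nontrivial (M true)] [Nontrivial (M false)]
    (a : M true) (ha1 : a ≠ 1) (ha2 : a ≠ a⁻¹) (g h : CoprodI M) :
    letI t : ℕ → CoprodI M → ℤ := fun k x =>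
      (segCount ⟨true, a⟩ k x : ℤ) - segCount ⟨true, a⁻¹⟩ k x
    {k : ℕ | t k (g * h) ≠ t k g + t k h}.encard ≤ 9 := by
  have hss : (⟨true, a⟩ : Σ b, M b) ≠ ⟨true, a⁻¹⟩ := by
    intro hcon
    apply ha2
    simpa using hcon
  have hinv1 : invS (⟨true, a⁻¹⟩ : Σ b, M b) = ⟨true, a⟩ := by
    show (⟨true, a⁻¹⁻¹⟩ : Σ b, M b) = ⟨true, a⟩
    rw [inv_inv]
  have hinv2 : invS (⟨true, a⟩ : Σ b, M b) = ⟨true, a⁻¹⟩ := rfl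
  have main : {k : ℕ |
      (cnt (⟨true, a⟩ : Σ b, M b) k (syllables (g * h)) : ℤ) -
        cnt (⟨true, a⁻¹⟩ : Σ b, M b) k (syllables (g * h)) ≠
      ((cnt (⟨true, a⟩ : Σ b, M b) k (syllables g) : ℤ) -
        cnt (⟨true, a⁻¹⟩ : Σ b, M b) k (syllables g)) +
      ((cnt (⟨true, a⟩ : Σ b, M b) k (syllables h) : ℤ) -
        cnt (⟨true, a⁻¹⟩ : Σ b, M b) k (syllables h))}.encard ≤ 9 := by
    have hrr1 : ∀ (r : List (Σ b, M b)) (k : ℕ),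
        cnt (⟨true, a⟩ : Σ b, M b) k (invRev r) = cnt (⟨true, a⁻¹⟩ : Σ b, M b) k r := by
      intro r k
      rw [← hinv1]
      exact cnt_invRev _ _ _
    have hrr2 : ∀ (r : List (Σ b, M b)) (k : ℕ),
        cnt (⟨true, a⁻¹⟩ : Σ b, M b) k (invRev r) = cnt (⟨true, a⟩ : Σ b, M b) k r := by
      intro r k
      rw [← hinv2]
      exact cnt_invRev _ _ _
    rcases mul_syllables_decomp g h with ⟨p, r, q, hg, hh, hgh⟩ |
      ⟨p, r, q, i, x, y, hg, hh, hgh⟩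
    · exact t_decomp_bound hss _ _ _ (invRev r) p r q [] [] []
        (by simp) (by simp) (by simp)
        (by rw [hg]; simp) (by rw [hh]; simp) (by rw [hgh]; simp)
        (hrr1 r) (hrr2 r)
    · exact t_decomp_bound hss _ _ _ (invRev r) p r q [⟨i, x⟩] [⟨i, y⟩] [⟨i, x * y⟩]
        (by simp) (by simp) (by simp)
        (by rw [hg]; simp) (by rw [hh]; simp) (by rw [hgh]; simp)
        (hrr1 r) (hrr2 r)
  have hfin := main
  simp only [← segCount_eq_cnt] at hfin
  exact hfin
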